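/- Let p ≥ 5 be a prime and let k be a field of characteristic p. Let a, b ∈ k with 4a³ + 27b² ≠ 0, set f := x³ + a·x + b ∈ k[x], and assume h := (the coefficient of x^{p-1} in f^{(p-1)/2}) is nonzero. Let κ ∈ ℤ[A,B,X] be the unique polynomial with p·κ = X^{3p} + A^p·X^p + B^p − (X³ + A·X + B)^p, and let K₀ ∈ k[x] be obtained from κ by mapping A ↦ a, B ↦ b, X ↦ x. Let Z ∈ k[x] be any polynomial whose derivative equals h⁻¹·f^{(p-1)/2} − x^{p-1}. Then there exist μ₀, μ₁, μ₂ ∈ k such that f^{(p+1)/2} divides K₀ + (3x² + a)^p · (Z + μ₀ + μ₁·x^p + μ₂·x^{2p}) in k[x]. -/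

import Mathlib

open Polynomial

lemma aux_deriv_aeval {k : Type*} [CommRing k] (a b : k) (q : MvPolynomial (Fin 3) ℤ) :
    derivative (MvPolynomial.aeval ![C a, C b, (X : k[X])] q)
      = MvPolynomial.aeval ![C a, C b, (X : k[X])] (MvPolynomial.pderiv 2 q) := by
  induction q using MvPolynomial.induction_on with
  | C n => simp
  | add q r hq hr => simp [hq, hr]
  | mul_X q i hq =>
    rw [map_mul, derivative_mul, hq, Derivation.leibniz, map_add]
    fin_cases i <;>
      simp [MvPolynomial.pderiv_X_self, MvPolynomial.pderiv_X_of_ne, smul_eq_mul] <;>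
      ring

lemma aux_pderiv_kappa (p : ℕ) (hp : p.Prime) (κ : MvPolynomial (Fin 3) ℤ)
    (hκ : (p : MvPolynomial (Fin 3) ℤ) * κ =
      (MvPolynomial.X 2) ^ (3 * p) + (MvPolynomial.X 0) ^ p * (MvPolynomial.X 2) ^ p
        + (MvPolynomial.X 1) ^ p
        - ((MvPolynomial.X 2) ^ 3 + MvPolynomial.X 0 * MvPolynomial.X 2
            + MvPolynomial.X 1) ^ p) :
    MvPolynomial.pderiv 2 κ =
      3 * (MvPolynomial.X 2) ^ (3 * p - 1)
        + (MvPolynomial.X 0) ^ p * (MvPolynomial.X 2) ^ (p - 1)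
        - ((MvPolynomial.X 2) ^ 3 + MvPolynomial.X 0 * MvPolynomial.X 2
            + MvPolynomial.X 1) ^ (p - 1)
          * (3 * (MvPolynomial.X 2) ^ 2 + MvPolynomial.X 0) := by
  have hp0 : (p : MvPolynomial (Fin 3) ℤ) ≠ 0 := by
    exact_mod_cast Nat.cast_ne_zero.mpr hp.ne_zero
  apply mul_left_cancel₀ hp0
  have := congrArg (MvPolynomial.pderiv 2) hκ
  rw [Derivation.leibniz, Derivation.map_natCast, smul_zero, add_zero, smul_eq_mul] at this
  rw [this]
  simp only [Derivation.leibniz, map_sub, map_add, MvPolynomial.pderiv_pow, MvPolynomial.pderiv_X_self,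
    MvPolynomial.pderiv_X_of_ne (show (0:Fin 3) ≠ 2 by decide),
    MvPolynomial.pderiv_X_of_ne (show (1:Fin 3) ≠ 2 by decide),
    smul_eq_mul, mul_one, mul_zero, zero_mul, add_zero, zero_add, smul_zero]
  have e3 : (3:ℕ) - 1 = 2 := rfl
  rw [e3]
  push_cast
  ring

lemma aux_frob_fprime (p : ℕ) (hp : p.Prime) (k : Type*) [Field k] [CharP k p] (a : k) :
    (3 * (X:k[X]) ^ 2 + C a) ^ p = 3 * X ^ (2*p) + C (a ^ p) := by
  haveI : Fact p.Prime := ⟨hp⟩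
  haveI : ExpChar k[X] p := ExpChar.prime hp
  rw [add_pow_char, mul_pow, ← C_pow, ← pow_mul]
  congr 2
  calc (3:k[X])^p = ((3:ℕ):k[X])^p := by norm_num
    _ = frobenius k[X] p ((3:ℕ):k[X]) := rfl
    _ = ((3:ℕ):k[X]) := map_natCast _ 3
    _ = 3 := by norm_num

lemma aux_derivW (p : ℕ) (hp : p.Prime) (hp5 : 5 ≤ p)
    (k : Type*) [Field k] [CharP k p] (a b : k)
    (κ : MvPolynomial (Fin 3) ℤ)
    (hκd : MvPolynomial.pderiv 2 κ =
      3 * (MvPolynomial.X 2) ^ (3 * p - 1)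
        + (MvPolynomial.X 0) ^ p * (MvPolynomial.X 2) ^ (p - 1)
        - ((MvPolynomial.X 2) ^ 3 + MvPolynomial.X 0 * MvPolynomial.X 2
            + MvPolynomial.X 1) ^ (p - 1)
          * (3 * (MvPolynomial.X 2) ^ 2 + MvPolynomial.X 0))
    (Z : k[X]) (h : k)
    (hZ : derivative Z =
      C h⁻¹ * ((X : k[X]) ^ 3 + C a * X + C b) ^ ((p - 1) / 2) - (X : k[X]) ^ (p - 1))
    (μ₀ μ₁ μ₂ : k)
    (haeval : derivative (MvPolynomial.aeval ![C a, C b, (X : k[X])] κ)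
      = MvPolynomial.aeval ![C a, C b, (X : k[X])] (MvPolynomial.pderiv 2 κ)) :
    derivative (MvPolynomial.aeval ![C a, C b, (X : k[X])] κ
          + (3 * (X : k[X]) ^ 2 + C a) ^ p
            * (Z + C μ₀ + C μ₁ * X ^ p + C μ₂ * X ^ (2 * p)))
      = ((X : k[X]) ^ 3 + C a * X + C b) ^ ((p - 1) / 2)
          * (C h⁻¹ * (3 * (X : k[X]) ^ 2 + C a) ^ p
             - ((X : k[X]) ^ 3 + C a * X + C b) ^ ((p - 1) / 2) * (3 * X ^ 2 + C a)) := by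
  have hpk : ((p : ℕ) : k[X]) = 0 := by
    rw [← map_natCast (Polynomial.C : k →+* k[X])]
    simp [CharP.cast_eq_zero k p]
  -- derivative of the first summand
  rw [derivative_add, haeval, hκd]
  simp only [map_sub, map_add, map_mul, map_pow, map_ofNat, MvPolynomial.aeval_X,
    Matrix.cons_val_zero, Matrix.cons_val_one, Matrix.head_cons, Matrix.cons_val_two,
    Matrix.tail_cons]
  have hodd : Odd p := hp.odd_of_ne_two (by omega)
  obtain ⟨m, hm⟩ := hodd
  have hpkC : (C ((p:ℕ):k) : k[X]) = 0 := by rw [CharP.cast_eq_zero k p, map_zero]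
  simp only [derivative_mul, derivative_pow, derivative_add, derivative_C, derivative_X_pow,
    hZ, hpk, hpkC, Nat.cast_mul, CharP.cast_eq_zero k p, C_pow, map_zero,
    zero_mul, mul_zero, add_zero, zero_add]
  rw [aux_frob_fprime p hp k a]
  have e1 : (X:k[X]) ^ (3*p-1) = X^(p-1) * X^(2*p) := by
    rw [← pow_add]; congr 1; omega
  have e2 : ((X:k[X])^3 + C a * X + C b) ^ (p-1)
      = ((X:k[X])^3 + C a * X + C b) ^ ((p-1)/2) * ((X:k[X])^3 + C a * X + C b) ^ ((p-1)/2) := by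
    rw [← pow_add]; congr 1; omega
  rw [e1, e2]
  simp only [CharP.cast_eq_zero k p, C_pow, mul_zero, zero_mul, map_zero, add_zero,
    zero_add, sub_zero, derivative_X, mul_one]
  ring

lemma aux_monic {k : Type*} [Field k] (a b : k) :
    ((X : k[X]) ^ 3 + C a * X + C b).Monic := by
  have H : (C a * X + C b).degree < ((3:ℕ) : WithBot ℕ) :=
    lt_of_le_of_lt (degree_add_le _ _) (max_lt
      (lt_of_le_of_lt (degree_mul_le _ _)
        (lt_of_le_of_lt (add_le_add degree_C_le degree_X_le) (by norm_num)))
      (lt_of_le_of_lt degree_C_le (by norm_num)))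
  have := monic_X_pow_add H
  simpa [add_assoc] using this

lemma aux_degree {k : Type*} [Field k] (a b : k) :
    ((X : k[X]) ^ 3 + C a * X + C b).natDegree = 3 := by
  compute_degree!

lemma aux_sep {k : Type*} [Field k] (a b : k) (hab : 4 * a ^ 3 + 27 * b ^ 2 ≠ 0) :
    ((X : k[X]) ^ 3 + C a * X + C b).Separable := by
  have hd : derivative ((X : k[X]) ^ 3 + C a * X + C b) = 3 * X ^ 2 + C a := by
    simp [derivative_X_pow, map_ofNat]
    norm_num
  rw [Separable, hd]
  refine ⟨C (4 * a ^ 3 + 27 * b ^ 2)⁻¹ * (C (-18 * a) * X + C (27 * b)),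
    C (4 * a ^ 3 + 27 * b ^ 2)⁻¹ * (C (6 * a) * X ^ 2 - C (9 * b) * X + C (4 * a ^ 2)), ?_⟩
  have key : (C (-18 * a) * X + C (27 * b)) * ((X : k[X]) ^ 3 + C a * X + C b)
      + (C (6 * a) * X ^ 2 - C (9 * b) * X + C (4 * a ^ 2)) * (3 * X ^ 2 + C a)
      = C (4 * a ^ 3 + 27 * b ^ 2) := by
    simp only [C_add, C_mul, C_pow, map_ofNat, map_neg, C_neg]
    ring
  have h1 : (C ((4 * a ^ 3 + 27 * b ^ 2)⁻¹) : k[X]) * C (4 * a ^ 3 + 27 * b ^ 2) = 1 := by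
    rw [← C_mul, inv_mul_cancel₀ hab, C_1]
  calc C (4 * a ^ 3 + 27 * b ^ 2)⁻¹ * (C (-18 * a) * X + C (27 * b)) * (X ^ 3 + C a * X + C b)
        + C (4 * a ^ 3 + 27 * b ^ 2)⁻¹ * (C (6 * a) * X ^ 2 - C (9 * b) * X + C (4 * a ^ 2))
          * (3 * X ^ 2 + C a)
      = C (4 * a ^ 3 + 27 * b ^ 2)⁻¹ * ((C (-18 * a) * X + C (27 * b)) * (X ^ 3 + C a * X + C b)
        + (C (6 * a) * X ^ 2 - C (9 * b) * X + C (4 * a ^ 2)) * (3 * X ^ 2 + C a)) := by ring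
    _ = 1 := by rw [key, h1]

lemma aux_roots {k K : Type*} [Field k] [Field K] [IsAlgClosed K] [Algebra k K] (a b : k)
    (hab : 4 * a ^ 3 + 27 * b ^ 2 ≠ 0) :
    ∃ r₀ r₁ r₂ : K, r₀ ≠ r₁ ∧ r₀ ≠ r₂ ∧ r₁ ≠ r₂ ∧
      ((X : k[X]) ^ 3 + C a * X + C b).map (algebraMap k K)
        = (X - C r₀) * (X - C r₁) * (X - C r₂) := by
  set F : K[X] := ((X : k[X]) ^ 3 + C a * X + C b).map (algebraMap k K) with hF
  have hmonF : F.Monic := (aux_monic a b).map _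
  have hdegF : F.natDegree = 3 := by
    rw [hF, natDegree_map, aux_degree]
  have hsplit : F.Splits := IsAlgClosed.splits F
  have hcard : Multiset.card F.roots = 3 := by
    rw [splits_iff_card_roots.mp hsplit, hdegF]
  have hsep : F.Separable := (aux_sep a b hab).map
  have hnodup : F.roots.Nodup := nodup_roots hsep
  obtain ⟨r₀, r₁, r₂, hr⟩ := Multiset.card_eq_three.mp hcard
  rw [hr] at hnodup
  have h01 : r₀ ≠ r₁ := by
    intro h; subst h; simp [Multiset.nodup_cons] at hnodup
  have h02 : r₀ ≠ r₂ := by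
    intro h; subst h; simp [Multiset.nodup_cons] at hnodup
  have h12 : r₁ ≠ r₂ := by
    intro h; subst h; simp [Multiset.nodup_cons] at hnodup
  refine ⟨r₀, r₁, r₂, h01, h02, h12, ?_⟩
  have := hsplit.eq_prod_roots_of_monic hmonF
  rw [hr] at this
  simpa [mul_assoc] using this

lemma aux_deriv_f {k : Type*} [Field k] (a b : k) :
    derivative ((X : k[X]) ^ 3 + C a * X + C b) = 3 * X ^ 2 + C a := by
  simp [derivative_X_pow, map_ofNat]
  norm_num

lemma aux_boost_root {K : Type*} [Field K] (p : ℕ) [CharP K p] (hp : p.Prime) (hp5 : 5 ≤ p)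
    (W : K[X]) (r : K) (h1 : (X - C r) ∣ W)
    (h2 : (X - C r) ^ ((p - 1) / 2) ∣ derivative W) :
    (X - C r) ^ ((p + 1) / 2) ∣ W := by
  obtain ⟨m, hm⟩ := hp.odd_of_ne_two (by omega)
  have key : ∀ j : ℕ, 1 ≤ j → j ≤ (p + 1) / 2 → (X - C r) ^ j ∣ W := by
    intro j hj
    induction j, hj using Nat.le_induction with
    | base => intro _; simpa using h1
    | succ j hj ih =>
      intro hle
      have hjle : j ≤ (p - 1) / 2 := by omega
      obtain ⟨u, hu⟩ := ih (by omega)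
      have hd : derivative W = C (j : K) * (X - C r) ^ (j - 1) * u
          + (X - C r) ^ j * derivative u := by
        rw [hu, derivative_mul, derivative_pow]
        simp
      have hdvdj : (X - C r) ^ j ∣ derivative W := dvd_trans (pow_dvd_pow _ hjle) h2
      have hdvd2 : (X - C r) ^ j ∣ C (j : K) * (X - C r) ^ (j - 1) * u := by
        have : C (j : K) * (X - C r) ^ (j - 1) * u
            = derivative W - (X - C r) ^ j * derivative u := by rw [hd]; ring
        rw [this]
        exact dvd_sub hdvdj (Dvd.intro _ rfl)
      obtain ⟨t, ht⟩ := hdvd2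
      have hXr : (X - C r : K[X]) ≠ 0 := X_sub_C_ne_zero r
      have hpow : ((X - C r : K[X]) ^ (j - 1)) ≠ 0 := pow_ne_zero _ hXr
      have hj1 : j - 1 + 1 = j := by omega
      have hpj : (X - C r : K[X]) ^ j = (X - C r) ^ (j - 1) * (X - C r) := by
        rw [← pow_succ, hj1]
      have hcancel : C (j : K) * u = (X - C r) * t := by
        apply mul_left_cancel₀ hpow
        calc (X - C r) ^ (j-1) * (C (j:K) * u) = C (j : K) * (X - C r) ^ (j - 1) * u := by ring
          _ = (X - C r) ^ j * t := ht
          _ = (X - C r) ^ (j-1) * ((X - C r) * t) := by rw [hpj]; ring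
      have hjne : ((j : K)) ≠ 0 := by
        rw [Ne, CharP.cast_eq_zero_iff K p j]
        intro hdvd
        have := Nat.le_of_dvd (by omega) hdvd
        omega
      have hu' : (X - C r) ∣ u := by
        refine ⟨C (j : K)⁻¹ * t, ?_⟩
        have : u = C (j:K)⁻¹ * (C (j:K) * u) := by
          rw [← mul_assoc, ← C_mul, inv_mul_cancel₀ hjne, C_1, one_mul]
        rw [this, hcancel]; ring
      obtain ⟨s, hs⟩ := hu'
      exact ⟨s, by rw [hu, hs]; ring⟩
  exact key _ (by omega) le_rfl

lemma aux_boost (p : ℕ) (hp : p.Prime) (hp5 : 5 ≤ p) {k : Type*} [Field k] [CharP k p]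
    (a b : k) (hab : 4 * a ^ 3 + 27 * b ^ 2 ≠ 0) (W : k[X])
    (h1 : ((X : k[X]) ^ 3 + C a * X + C b) ∣ W)
    (h2 : ((X : k[X]) ^ 3 + C a * X + C b) ^ ((p - 1) / 2) ∣ derivative W) :
    ((X : k[X]) ^ 3 + C a * X + C b) ^ ((p + 1) / 2) ∣ W := by
  set f : k[X] := X ^ 3 + C a * X + C b with hf
  let K := AlgebraicClosure k
  let φ := algebraMap k K
  haveI : CharP K p := charP_of_injective_algebraMap φ.injective p
  obtain ⟨r₀, r₁, r₂, h01, h02, h12, hfac⟩ := aux_roots (K := K) a b hab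
  have hmapdvd : f.map φ ∣ W.map φ := by
    simpa using _root_.map_dvd (mapRingHom φ) h1
  have hder : (f.map φ) ^ ((p - 1) / 2) ∣ derivative (W.map φ) := by
    rw [derivative_map, ← Polynomial.map_pow]
    simpa using _root_.map_dvd (mapRingHom φ) h2
  have hroot : ∀ r : K, (X - C r) ∣ f.map φ → (X - C r) ^ ((p + 1) / 2) ∣ W.map φ := by
    intro r hr
    apply aux_boost_root p hp hp5
    · exact hr.trans hmapdvd
    · exact (pow_dvd_pow_of_dvd hr _).trans hder
  have hd0 : (X - C r₀) ^ ((p+1)/2) ∣ W.map φ := hroot r₀ ⟨(X - C r₁) * (X - C r₂), by rw [hfac]; ring⟩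
  have hd1 : (X - C r₁) ^ ((p+1)/2) ∣ W.map φ := hroot r₁ ⟨(X - C r₀) * (X - C r₂), by rw [hfac]; ring⟩
  have hd2 : (X - C r₂) ^ ((p+1)/2) ∣ W.map φ := hroot r₂ ⟨(X - C r₀) * (X - C r₁), by rw [hfac]; ring⟩
  have c01 : IsCoprime ((X - C r₀) ^ ((p+1)/2)) ((X - C r₁) ^ ((p+1)/2)) :=
    (isCoprime_X_sub_C_of_isUnit_sub (sub_ne_zero_of_ne h01).isUnit).pow
  have c02 : IsCoprime ((X - C r₀) ^ ((p+1)/2)) ((X - C r₂) ^ ((p+1)/2)) :=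
    (isCoprime_X_sub_C_of_isUnit_sub (sub_ne_zero_of_ne h02).isUnit).pow
  have c12 : IsCoprime ((X - C r₁) ^ ((p+1)/2)) ((X - C r₂) ^ ((p+1)/2)) :=
    (isCoprime_X_sub_C_of_isUnit_sub (sub_ne_zero_of_ne h12).isUnit).pow
  have dvd01 : (X - C r₀) ^ ((p+1)/2) * (X - C r₁) ^ ((p+1)/2) ∣ W.map φ := c01.mul_dvd hd0 hd1
  have dvdall : (X - C r₀) ^ ((p+1)/2) * (X - C r₁) ^ ((p+1)/2) * (X - C r₂) ^ ((p+1)/2)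
      ∣ W.map φ := (IsCoprime.mul_left c02 c12).mul_dvd dvd01 hd2
  have : (f.map φ) ^ ((p+1)/2) ∣ W.map φ := by
    rw [hfac, mul_pow, mul_pow]; exact dvdall
  rw [← Polynomial.map_pow] at this
  exact (map_dvd_map' φ).mp this

lemma aux_exists_mu (p : ℕ) (hp : p.Prime) (hp5 : 5 ≤ p) {k : Type*} [Field k] [CharP k p]
    (a b : k) (hab : 4 * a ^ 3 + 27 * b ^ 2 ≠ 0) (W₀ : k[X]) :
    ∃ μ₀ μ₁ μ₂ : k, ((X : k[X]) ^ 3 + C a * X + C b) ∣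
      W₀ + (3 * (X : k[X]) ^ 2 + C a) ^ p * (C μ₀ + C μ₁ * X ^ p + C μ₂ * X ^ (2 * p)) := by
  set f : k[X] := X ^ 3 + C a * X + C b with hf
  have hmon : f.Monic := aux_monic a b
  let R := AdjoinRoot f
  let pb : PowerBasis k R := AdjoinRoot.powerBasis' hmon
  have hfinrank : Module.finrank k R = 3 := by
    rw [pb.finrank]
    show f.natDegree = 3
    exact aux_degree a b
  haveI : FiniteDimensional k R := .of_finrank_pos (by rw [hfinrank]; norm_num)
  set r : R := AdjoinRoot.root f with hr
  set v : Fin 3 → R := ![1, r ^ p, r ^ (2 * p)] with hv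
  -- `mk` of the relevant combination
  have hmk : ∀ c₀ c₁ c₂ : k, AdjoinRoot.mk f (C c₀ + C c₁ * X ^ p + C c₂ * X ^ (2 * p))
      = c₀ • (1 : R) + c₁ • r ^ p + c₂ • r ^ (2 * p) := by
    intro c₀ c₁ c₂
    simp only [map_add, map_mul, map_pow, AdjoinRoot.mk_C, AdjoinRoot.mk_X,
      Algebra.smul_def, mul_one]
    rfl
  -- linear independence
  have hli : LinearIndependent k v := by
    rw [Fintype.linearIndependent_iff]
    intro g hg
    have hsum : g 0 • (1 : R) + g 1 • r ^ p + g 2 • r ^ (2 * p) = 0 := by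
      rw [← hg, Fin.sum_univ_three]; rfl
    have hdvd : f ∣ C (g 0) + C (g 1) * X ^ p + C (g 2) * X ^ (2 * p) := by
      rw [← AdjoinRoot.mk_eq_zero, hmk, hsum]
    -- move to the algebraic closure
    let K := AlgebraicClosure k
    let φ := algebraMap k K
    haveI : CharP K p := charP_of_injective_algebraMap φ.injective p
    obtain ⟨r₀, r₁, r₂, h01, h02, h12, hfac⟩ := aux_roots (K := K) a b hab
    have hmapdvd : f.map φ ∣ (C (g 0) + C (g 1) * X ^ p + C (g 2) * X ^ (2 * p)).map φ := by
      simpa using _root_.map_dvd (mapRingHom φ) hdvd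
    have heval : ∀ s : K, (X - C s) ∣ f.map φ →
        φ (g 0) + φ (g 1) * s ^ p + φ (g 2) * (s ^ p) ^ 2 = 0 := by
      intro s hs
      have : (X - C s) ∣ (C (g 0) + C (g 1) * X ^ p + C (g 2) * X ^ (2 * p)).map φ :=
        hs.trans hmapdvd
      have h0 : eval s ((C (g 0) + C (g 1) * X ^ p + C (g 2) * X ^ (2 * p)).map φ) = 0 :=
        eval_eq_zero_of_dvd_of_eval_eq_zero this (by simp)
      simpa [Polynomial.map_add, Polynomial.map_mul, Polynomial.map_pow, Polynomial.map_C,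
        Polynomial.map_X, pow_mul, mul_comm 2 p] using h0
    have e0 := heval r₀ ⟨(X - C r₁) * (X - C r₂), by rw [hfac]; ring⟩
    have e1 := heval r₁ ⟨(X - C r₀) * (X - C r₂), by rw [hfac]; ring⟩
    have e2 := heval r₂ ⟨(X - C r₀) * (X - C r₁), by rw [hfac]; ring⟩
    -- the p-th powers of the roots are pairwise distinct
    haveI : Fact p.Prime := ⟨hp⟩
    haveI : ExpChar K p := ExpChar.prime hp
    have hfrob : ∀ x y : K, x ^ p = y ^ p → x = y := by
      intro x y hxy
      have : (x - y) ^ p = 0 := by rw [sub_pow_char, hxy, sub_self]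
      have := pow_eq_zero_iff (n := p) (by omega) |>.mp this
      exact sub_eq_zero.mp this
    have s01 : r₀ ^ p ≠ r₁ ^ p := fun h => h01 (hfrob _ _ h)
    have s02 : r₀ ^ p ≠ r₂ ^ p := fun h => h02 (hfrob _ _ h)
    have s12 : r₁ ^ p ≠ r₂ ^ p := fun h => h12 (hfrob _ _ h)
    -- Vandermonde-style elimination
    have q01 : φ (g 1) + φ (g 2) * (r₀ ^ p + r₁ ^ p) = 0 := by
      apply mul_left_cancel₀ (sub_ne_zero_of_ne s01)
      rw [mul_zero]
      linear_combination e0 - e1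
    have q02 : φ (g 1) + φ (g 2) * (r₀ ^ p + r₂ ^ p) = 0 := by
      apply mul_left_cancel₀ (sub_ne_zero_of_ne s02)
      rw [mul_zero]
      linear_combination e0 - e2
    have hc2 : φ (g 2) = 0 := by
      apply mul_left_cancel₀ (sub_ne_zero_of_ne s12)
      rw [mul_zero]
      linear_combination q01 - q02
    have hc1 : φ (g 1) = 0 := by linear_combination q01 - (r₀ ^ p + r₁ ^ p) * hc2
    have hc0 : φ (g 0) = 0 := by
      linear_combination e0 - r₀ ^ p * hc1 - (r₀ ^ p) ^ 2 * hc2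
    have hinj := φ.injective
    intro i
    fin_cases i
    · exact hinj (by simpa using hc0)
    · exact hinj (by simpa using hc1)
    · exact hinj (by simpa using hc2)
  -- span is everything
  have hspan : Submodule.span k (Set.range v) = ⊤ :=
    hli.span_eq_top_of_card_eq_finrank (by simp [hfinrank])
  -- the derivative is invertible in R
  obtain ⟨u, w, huw⟩ := aux_sep a b hab
  have hinv : AdjoinRoot.mk f w * AdjoinRoot.mk f (derivative f) = 1 := by
    have h' := congrArg (AdjoinRoot.mk f) huw
    rw [map_add, map_mul, map_mul, AdjoinRoot.mk_self, mul_zero, zero_add, map_one] at h'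
    exact h'
  -- pick the coefficients
  have hmem : -((AdjoinRoot.mk f w) ^ p * AdjoinRoot.mk f W₀) ∈ Submodule.span k (Set.range v) := by
    rw [hspan]; trivial
  obtain ⟨c, hc⟩ := (Submodule.mem_span_range_iff_exists_fun k).mp hmem
  refine ⟨c 0, c 1, c 2, ?_⟩
  rw [← AdjoinRoot.mk_eq_zero]
  have hder : (3 * (X : k[X]) ^ 2 + C a) = derivative f := (aux_deriv_f a b).symm
  have hcsum : (c 0) • (1 : R) + (c 1) • r ^ p + (c 2) • r ^ (2 * p)
      = -((AdjoinRoot.mk f w) ^ p * AdjoinRoot.mk f W₀) := by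
    rw [← hc, Fin.sum_univ_three]; rfl
  rw [map_add, map_mul, hmk (c 0) (c 1) (c 2), hcsum, map_pow, hder]
  have hp1 : (AdjoinRoot.mk f w) ^ p * (AdjoinRoot.mk f (derivative f)) ^ p = 1 := by
    rw [← mul_pow, hinv, one_pow]
  linear_combination (-(AdjoinRoot.mk f W₀)) * hp1

theorem divisibility_step_extension_of_frobenius_lift
    (p : ℕ) (hp : p.Prime) (hp5 : 5 ≤ p)
    (k : Type*) [Field k] [CharP k p] (a b : k)
    (hab : 4 * a ^ 3 + 27 * b ^ 2 ≠ 0)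
    (hH : ((((X : k[X]) ^ 3 + C a * X + C b) ^ ((p - 1) / 2)).coeff (p - 1)) ≠ 0)
    (κ : MvPolynomial (Fin 3) ℤ)
    (hκ : (p : MvPolynomial (Fin 3) ℤ) * κ =
      (MvPolynomial.X 2) ^ (3 * p) + (MvPolynomial.X 0) ^ p * (MvPolynomial.X 2) ^ p
        + (MvPolynomial.X 1) ^ p
        - ((MvPolynomial.X 2) ^ 3 + MvPolynomial.X 0 * MvPolynomial.X 2
            + MvPolynomial.X 1) ^ p)
    (Z : k[X])
    (hZ : derivative Z =
      C (((((X : k[X]) ^ 3 + C a * X + C b) ^ ((p - 1) / 2)).coeff (p - 1))⁻¹)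
        * ((X : k[X]) ^ 3 + C a * X + C b) ^ ((p - 1) / 2) - (X : k[X]) ^ (p - 1)) :
    ∃ μ₀ μ₁ μ₂ : k,
      ((X : k[X]) ^ 3 + C a * X + C b) ^ ((p + 1) / 2) ∣
        MvPolynomial.aeval ![C a, C b, (X : k[X])] κ
          + (3 * (X : k[X]) ^ 2 + C a) ^ p
            * (Z + C μ₀ + C μ₁ * X ^ p + C μ₂ * X ^ (2 * p)) := by
  obtain ⟨μ₀, μ₁, μ₂, hdvd1⟩ := aux_exists_mu p hp hp5 a b hab
    (MvPolynomial.aeval ![C a, C b, (X : k[X])] κ + (3 * (X : k[X]) ^ 2 + C a) ^ p * Z)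
  refine ⟨μ₀, μ₁, μ₂, ?_⟩
  apply aux_boost p hp hp5 a b hab
  · have heq : MvPolynomial.aeval ![C a, C b, (X : k[X])] κ
        + (3 * (X : k[X]) ^ 2 + C a) ^ p * (Z + C μ₀ + C μ₁ * X ^ p + C μ₂ * X ^ (2 * p))
        = MvPolynomial.aeval ![C a, C b, (X : k[X])] κ + (3 * (X : k[X]) ^ 2 + C a) ^ p * Z
          + (3 * (X : k[X]) ^ 2 + C a) ^ p * (C μ₀ + C μ₁ * X ^ p + C μ₂ * X ^ (2 * p)) := by
      ring
    rw [heq]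
    exact hdvd1
  · rw [aux_derivW p hp hp5 k a b κ (aux_pderiv_kappa p hp κ hκ) Z
      _ hZ μ₀ μ₁ μ₂
      (aux_deriv_aeval a b κ)]
    exact Dvd.intro _ rfl
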